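/- Let F be a finite subset of ℤ² with nonincreasing row sums (r_i) and column sums (c_j), and let F₁ = {(i,j) : 1 ≤ j ≤ r_i} be its uniquely determined neighbour with column sums v_j = #{l : r_l ≥ j}. If the columns where v_j > c_j, each listed with multiplicity v_j − c_j, have indices j₁ ≤ … ≤ j_α, and the columns where c_i > v_i, each listed with multiplicity c_i − v_i, have indices i₁ ≤ … ≤ i_α, then both lists have the same length α = (1/2)Σ_j |c_j − v_j|, and i_t > j_t for all 1 ≤ t ≤ α. -/

import Mathlib

open Finset

/-- Number of elements of `F` in row `i`. -/
def rowSum (F : Finset (ℤ × ℤ)) (i : ℤ) : ℕ := (F.filter fun p => p.1 = i).card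

/-- Number of elements of `F` in column `j`. -/
def colSum (F : Finset (ℤ × ℤ)) (j : ℤ) : ℕ := (F.filter fun p => p.2 = j).card

/-- `F` has row sums `r` on rows `1..m`, column sums `c` on columns `1..n`,
and zero line sums elsewhere. -/
def hasLineSums (F : Finset (ℤ × ℤ)) (m n : ℕ) (r : Fin m → ℕ) (c : Fin n → ℕ) : Prop :=
  (∀ i : Fin m, rowSum F ((i : ℤ) + 1) = r i) ∧
  (∀ i : ℤ, (∀ k : Fin m, (k : ℤ) + 1 ≠ i) → rowSum F i = 0) ∧
  (∀ j : Fin n, colSum F ((j : ℤ) + 1) = c j) ∧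
  (∀ j : ℤ, (∀ k : Fin n, (k : ℤ) + 1 ≠ j) → colSum F j = 0)

/-- The conjugate partition: `conj m r j = #{l : r l ≥ j}`. -/
def conj (m : ℕ) (r : Fin m → ℕ) (j : ℕ) : ℕ := (Finset.univ.filter fun l => j ≤ r l).card

section Aux
variable {F : Finset (ℤ × ℤ)} {m n : ℕ} {r : Fin m → ℕ} {c : Fin n → ℕ}

/-- Generic fiber counting: number of `t` with `J t` in an initial segment. -/
lemma fiber_count {a : ℕ} (K : ℕ) (J : Fin a → Fin n) (g : Fin n → ℕ)
    (hJm : ∀ j : Fin n, (Finset.univ.filter fun t => J t = j).card = g j) :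
    (univ.filter fun t : Fin a => (J t : ℕ) < K).card
      = ∑ j ∈ univ.filter (fun j : Fin n => (j : ℕ) < K), g j := by
  rw [Finset.card_eq_sum_card_fiberwise (f := J)
    (t := univ.filter (fun j : Fin n => (j : ℕ) < K))
    (fun t ht => by simp only [Finset.mem_coe] at *; rw [mem_filter] at *; exact ⟨mem_univ _, ht.2⟩)]
  refine Finset.sum_congr rfl fun j hj => ?_
  rw [mem_filter] at hj
  rw [← hJm j, Finset.filter_filter]
  congr 1
  ext t
  simp only [mem_filter, mem_univ, true_and]
  constructor
  · exact fun h => h.2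
  · intro h; exact ⟨by rw [h]; exact hj.2, h⟩

/-- Sum over a range of a function vanishing from `n` on equals a `Fin n` filtered sum. -/
lemma range_to_fin (K : ℕ) (V : ℕ → ℕ) (hV0 : ∀ j, n ≤ j → V j = 0) :
    ∑ j ∈ Finset.range K, V j
      = ∑ j ∈ univ.filter (fun j : Fin n => (j : ℕ) < K), V (j : ℕ) := by
  rw [Finset.sum_filter, Fin.sum_univ_eq_sum_range (fun j => if j < K then V j else 0),
    ← Finset.sum_filter]
  have h2 : (Finset.range n).filter (fun j => j < K) = Finset.range (min n K) := by
    ext x; simp only [mem_filter, mem_range]; omega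
  rw [h2]
  symm
  apply Finset.sum_subset
  · intro x hx; rw [mem_range] at *; omega
  · intro x hx hx2
    rw [mem_range] at *
    exact hV0 x (by omega)

/-- Conjugate partition identity. -/
lemma min_conj (K : ℕ) : ∑ i : Fin m, min (r i) K = ∑ j ∈ Finset.range K, conj m r (j+1) := by
  have h1 : ∀ j, conj m r (j+1) = ∑ l : Fin m, if j + 1 ≤ r l then 1 else 0 := by
    intro j; rw [conj, Finset.card_filter]
  simp_rw [h1]
  rw [Finset.sum_comm]
  refine Finset.sum_congr rfl fun l _ => ?_
  rw [← Finset.card_filter]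
  have : (Finset.range K).filter (fun x => x + 1 ≤ r l) = Finset.range (min (r l) K) := by
    ext x; simp only [mem_filter, mem_range]; omega
  rw [this, Finset.card_range]

variable (hF : hasLineSums F m n r c)
include hF

lemma mem_row (p : ℤ × ℤ) (hp : p ∈ F) : ∃ i : Fin m, p.1 = (i : ℤ) + 1 := by
  by_contra h
  push_neg at h
  have h0 : rowSum F p.1 = 0 := hF.2.1 p.1 (fun k => fun hk => (h k hk.symm))
  have hm : p ∈ F.filter fun q => q.1 = p.1 := by simp [hp]
  have := Finset.card_pos.2 ⟨p, hm⟩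
  rw [rowSum] at h0
  omega

lemma mem_col (p : ℤ × ℤ) (hp : p ∈ F) : ∃ j : Fin n, p.2 = (j : ℤ) + 1 := by
  by_contra h
  push_neg at h
  have h0 : colSum F p.2 = 0 := hF.2.2.2 p.2 (fun k => fun hk => (h k hk.symm))
  have hm : p ∈ F.filter fun q => q.2 = p.2 := by simp [hp]
  have := Finset.card_pos.2 ⟨p, hm⟩
  rw [colSum] at h0
  omega

/-- Points in row `i` with column at most `K`. -/
lemma row_slice_bound (i : Fin m) (K : ℕ) :
    ((F.filter fun p => p.2 ≤ (K:ℤ) ∧ p.1 = (i:ℤ)+1)).card ≤ min (r i) K := by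
  refine le_min ?_ ?_
  · rw [← hF.1 i, rowSum]
    apply Finset.card_le_card
    intro p hp
    rw [mem_filter] at *
    exact ⟨hp.1, hp.2.2⟩
  · calc ((F.filter fun p => p.2 ≤ (K:ℤ) ∧ p.1 = (i:ℤ)+1)).card
        ≤ (Finset.Icc (1:ℤ) K).card := by
          apply Finset.card_le_card_of_injOn (fun p => p.2)
          · intro p hp
            rw [Finset.mem_coe, mem_filter] at hp
            obtain ⟨j, hj⟩ := mem_col hF p hp.1
            rw [Finset.mem_coe, Finset.mem_Icc]
            refine ⟨?_, hp.2.1⟩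
            show (1:ℤ) ≤ p.2; rw [hj]; have : (0:ℤ) ≤ ((j:ℕ):ℤ) := Int.natCast_nonneg _; omega
          · intro p hp q hq hpq
            simp only [Finset.coe_filter, Set.mem_setOf_eq] at hp hq
            exact Prod.ext (hp.2.2.trans hq.2.2.symm) hpq
    _ = K := by rw [Int.card_Icc]; omega

/-- Counting points with bounded column, by columns. -/
lemma col_count (K : ℕ) :
    (F.filter fun p => p.2 ≤ (K : ℤ)).card
      = ∑ j ∈ univ.filter (fun j : Fin n => (j : ℕ) < K), c j := by
  set s := F.filter fun p => p.2 ≤ (K : ℤ) with hs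
  have hmap : ∀ p ∈ s, p.2 ∈ (univ.filter fun j : Fin n => (j : ℕ) < K).image
      (fun j : Fin n => (j : ℤ) + 1) := by
    intro p hp
    rw [hs, mem_filter] at hp
    obtain ⟨j, hj⟩ := mem_col hF p hp.1
    refine mem_image.2 ⟨j, mem_filter.2 ⟨mem_univ _, ?_⟩, hj.symm⟩
    have := hp.2
    rw [hj] at this
    exact_mod_cast (by omega : ((j:ℕ) : ℤ) < (K : ℤ))
  rw [Finset.card_eq_sum_card_fiberwise hmap,
    Finset.sum_image (fun x _ y _ h => Fin.ext (by omega))]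
  refine Finset.sum_congr rfl fun j hj => ?_
  rw [mem_filter] at hj
  rw [hs, Finset.filter_filter]
  rw [← hF.2.2.1 j, colSum]
  congr 1
  apply Finset.filter_congr
  intro p _
  constructor
  · exact fun h => h.2
  · intro h; exact ⟨by rw [h]; exact_mod_cast (by omega : (j:ℕ) + 1 ≤ K), h⟩

/-- Counting points with bounded column, by rows (an upper bound). -/
lemma row_count_bound (K : ℕ) :
    (F.filter fun p => p.2 ≤ (K : ℤ)).card ≤ ∑ i : Fin m, min (r i) K := by
  set s := F.filter fun p => p.2 ≤ (K : ℤ) with hs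
  have hmap : ∀ p ∈ s, p.1 ∈ (univ : Finset (Fin m)).image (fun i : Fin m => (i : ℤ) + 1) := by
    intro p hp
    rw [hs, mem_filter] at hp
    obtain ⟨i, hi⟩ := mem_row hF p hp.1
    exact mem_image.2 ⟨i, mem_univ _, hi.symm⟩
  rw [Finset.card_eq_sum_card_fiberwise hmap,
    Finset.sum_image (fun x _ y _ h => Fin.ext (by omega))]
  apply Finset.sum_le_sum
  intro i _
  rw [hs, Finset.filter_filter]
  exact row_slice_bound hF i K

lemma r_le_n (i : Fin m) : r i ≤ n := by
  rw [← hF.1 i, rowSum]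
  calc (F.filter fun p => p.1 = (i:ℤ)+1).card
      ≤ ((univ : Finset (Fin n)).image (fun j : Fin n => (j : ℤ) + 1)).card := by
        apply Finset.card_le_card_of_injOn (fun p => p.2)
        · intro p hp
          rw [Finset.mem_coe, mem_filter] at hp
          obtain ⟨j, hj⟩ := mem_col hF p hp.1
          exact mem_image.2 ⟨j, mem_univ _, hj.symm⟩
        · intro p hp q hq hpq
          simp only [Finset.coe_filter, Set.mem_setOf_eq] at hp hq
          exact Prod.ext (hp.2.trans hq.2.symm) hpq
  _ ≤ n := by
        apply le_trans Finset.card_image_le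
        simp

lemma conj_vanish (j : ℕ) (hj : n ≤ j) : conj m r (j + 1) = 0 := by
  rw [conj, Finset.card_eq_zero, Finset.filter_eq_empty_iff]
  intro l _
  have := r_le_n hF l
  omega

/-- Gale–Ryser domination: partial column sums are dominated by the conjugate. -/
lemma partial_dom (K : ℕ) :
    ∑ j ∈ univ.filter (fun j : Fin n => (j : ℕ) < K), c j
      ≤ ∑ j ∈ univ.filter (fun j : Fin n => (j : ℕ) < K), conj m r ((j:ℕ) + 1) := by
  rw [← col_count hF K, ← range_to_fin K (fun j => conj m r (j+1)) (conj_vanish hF),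
    ← min_conj K]
  exact row_count_bound hF K

/-- Equality of total sums. -/
lemma total_eq : ∑ j : Fin n, c j = ∑ j : Fin n, conj m r ((j:ℕ) + 1) := by
  have huniv : (univ.filter (fun j : Fin n => (j : ℕ) < n)) = univ := by
    apply Finset.filter_true_of_mem
    intro j _
    exact j.isLt
  have hFall : F.filter (fun p => p.2 ≤ (n : ℤ)) = F := by
    apply Finset.filter_true_of_mem
    intro p hp
    obtain ⟨j, hj⟩ := mem_col hF p hp
    rw [hj]
    exact_mod_cast (by have := j.isLt; omega : (j:ℕ) + 1 ≤ n)
  have h1 : ∑ j : Fin n, c j = F.card := by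
    rw [← huniv, ← col_count hF n, hFall]
  have h2 : F.card = ∑ i : Fin m, r i := by
    conv_lhs => rw [← hFall]
    have := col_count hF n
    have hb := row_count_bound hF n
    have hmin : ∀ i : Fin m, min (r i) n = r i := fun i => min_eq_left (r_le_n hF i)
    -- lower bound: card ≥ ∑ r i since each row slice has exactly r i elements
    have hmap : ∀ p ∈ F, p.1 ∈ (univ : Finset (Fin m)).image
        (fun i : Fin m => (i : ℤ) + 1) := by
      intro p hp
      obtain ⟨i, hi⟩ := mem_row hF p hp
      exact mem_image.2 ⟨i, mem_univ _, hi.symm⟩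
    rw [hFall, Finset.card_eq_sum_card_fiberwise hmap,
      Finset.sum_image (fun x _ y _ h => Fin.ext (by omega))]
    refine Finset.sum_congr rfl fun i _ => ?_
    rw [← hF.1 i, rowSum]
  rw [h1, h2]
  have h3 : ∑ j : Fin n, conj m r ((j:ℕ) + 1)
      = ∑ j ∈ Finset.range n, conj m r (j + 1) := by
    rw [range_to_fin n (fun j => conj m r (j+1)) (conj_vanish hF), huniv]
  rw [h3, ← min_conj n]
  refine Finset.sum_congr rfl fun i _ => ?_
  exact (min_eq_left (r_le_n hF i)).symm

end Aux

theorem stmt13 (m n a b α : ℕ) (r : Fin m → ℕ) (c : Fin n → ℕ) (F : Finset (ℤ × ℤ))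
    (hr : Antitone r) (hc : Antitone c) (hF : hasLineSums F m n r c)
    (hα : 2 * α = ∑ j : Fin n, ((c j : ℤ) - (conj m r ((j : ℕ) + 1) : ℤ)).natAbs)
    (J : Fin a → Fin n) (I : Fin b → Fin n) (hJ : Monotone J) (hI : Monotone I)
    (hJm : ∀ j : Fin n,
      (Finset.univ.filter fun t => J t = j).card = conj m r ((j : ℕ) + 1) - c j)
    (hIm : ∀ j : Fin n,
      (Finset.univ.filter fun t => I t = j).card = c j - conj m r ((j : ℕ) + 1)) :
    a = α ∧ b = α ∧
    ∀ (t : Fin a) (s : Fin b), (t : ℕ) = (s : ℕ) → (J t : ℕ) < (I s : ℕ) := by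
  set v : Fin n → ℕ := fun j => conj m r ((j:ℕ) + 1) with hv
  -- surplus and deficit partial counts
  set Sur : ℕ → ℕ := fun K => ∑ j ∈ univ.filter (fun j : Fin n => (j : ℕ) < K), (v j - c j)
    with hSur
  set Def : ℕ → ℕ := fun K => ∑ j ∈ univ.filter (fun j : Fin n => (j : ℕ) < K), (c j - v j)
    with hDef
  have hdom : ∀ K, Def K ≤ Sur K := by
    intro K
    have hp := partial_dom hF K
    have key : (Def K : ℤ) = (Sur K : ℤ)
        + ((∑ j ∈ univ.filter (fun j : Fin n => (j : ℕ) < K), c j : ℕ) : ℤ)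
        - ((∑ j ∈ univ.filter (fun j : Fin n => (j : ℕ) < K), v j : ℕ) : ℤ) := by
      rw [hSur, hDef]
      push_cast
      rw [← Finset.sum_add_distrib, ← Finset.sum_sub_distrib]
      refine Finset.sum_congr rfl fun j _ => ?_
      omega
    have : (Def K : ℤ) ≤ (Sur K : ℤ) := by
      rw [key]
      have : ((∑ j ∈ univ.filter (fun j : Fin n => (j : ℕ) < K), c j : ℕ) : ℤ)
          ≤ ((∑ j ∈ univ.filter (fun j : Fin n => (j : ℕ) < K), v j : ℕ) : ℤ) := by
        exact_mod_cast hp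
      omega
    exact_mod_cast this
  have hSurCount : ∀ K, (univ.filter fun t : Fin a => (J t : ℕ) < K).card = Sur K :=
    fun K => fiber_count K J _ (fun j => hJm j)
  have hDefCount : ∀ K, (univ.filter fun t : Fin b => (I t : ℕ) < K).card = Def K :=
    fun K => fiber_count K I _ (fun j => hIm j)
  have huniv : (univ.filter (fun j : Fin n => (j : ℕ) < n)) = univ :=
    Finset.filter_true_of_mem (fun j _ => j.isLt)
  have ha : a = Sur n := by
    rw [← hSurCount n]
    rw [Finset.filter_true_of_mem (fun t _ => (J t).isLt)]
    simp
  have hb : b = Def n := by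
    rw [← hDefCount n]
    rw [Finset.filter_true_of_mem (fun t _ => (I t).isLt)]
    simp
  have htot := total_eq hF
  have hab : a = b := by
    have key : (Sur n : ℤ) = (Def n : ℤ)
        + ((∑ j : Fin n, v j : ℕ) : ℤ) - ((∑ j : Fin n, c j : ℕ) : ℤ) := by
      simp only [hSur, hDef]
      rw [huniv]
      push_cast
      rw [← Finset.sum_add_distrib, ← Finset.sum_sub_distrib]
      refine Finset.sum_congr rfl fun j _ => ?_
      omega
    have h2 : (Sur n : ℤ) = (Def n : ℤ) := by
      rw [key]
      have : (∑ j : Fin n, c j) = ∑ j : Fin n, v j := htot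
      rw [this]
      ring
    rw [ha, hb]
    exact_mod_cast h2
  have hsum : a + b = 2 * α := by
    rw [ha, hb]
    simp only [hSur, hDef]
    rw [huniv, ← Finset.sum_add_distrib, hα]
    refine Finset.sum_congr rfl fun j _ => ?_
    simp only [hv]
    omega
  have haα : a = α := by omega
  refine ⟨haα, by omega, ?_⟩
  intro t s hts
  by_contra hcon
  push_neg at hcon
  -- hcon : (I s : ℕ) ≤ (J t : ℕ)
  set K := (I s : ℕ) + 1 with hK
  -- Def K ≥ s + 1
  have hd : (s : ℕ) + 1 ≤ Def K := by
    rw [← hDefCount K]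
    calc (s : ℕ) + 1 = (Finset.Iic s).card := by rw [Fin.card_Iic]
    _ ≤ _ := by
        apply Finset.card_le_card
        intro s' hs'
        rw [Finset.mem_Iic] at hs'
        rw [mem_filter]
        exact ⟨mem_univ _, by have := hI hs'; omega⟩
  -- Sur K ≤ t
  have hsu : Sur K ≤ (t : ℕ) := by
    rw [← hSurCount K]
    calc (univ.filter fun t' : Fin a => (J t' : ℕ) < K).card
        ≤ (Finset.Iio t).card := by
          apply Finset.card_le_card
          intro t' ht'
          rw [mem_filter] at ht'
          rw [Finset.mem_Iio]
          by_contra hlt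
          push_neg at hlt
          have hJle := hJ hlt
          -- then J t' = I s as elements of Fin n
          have hJeq : J t' = I s := by
            apply Fin.ext
            have : (J t : ℕ) ≤ (J t' : ℕ) := hJle
            omega
          -- fiber of J at I s is nonempty, so v - c ≥ 1 there
          have h1 : 1 ≤ conj m r ((I s : ℕ) + 1) - c (I s) := by
            rw [← hJm (I s)]
            exact Finset.card_pos.2 ⟨t', by simp [hJeq]⟩
          have h2 : 1 ≤ c (I s) - conj m r ((I s : ℕ) + 1) := by
            rw [← hIm (I s)]
            exact Finset.card_pos.2 ⟨s, by simp⟩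
          omega
    _ = (t : ℕ) := Fin.card_Iio t
  have := hdom K
  omega
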